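/- Let (A, B, C) be a stabilizable and detectable realization such that no eigenvalue of A_0 is a transmission zero of P(s) = C(sI − A)^{-1}B, and let F be such that A − BF is Hurwitz. Then the regulator (Francis) equations (A − BF)Π + B F_0 = Π A_0 and CΠ = C_0 admit a solution pair (Π, F_0). -/

import Mathlib

open Matrix

/-- All eigenvalues (over ℂ) have negative real part. -/
def Hurwitz {n : Type*} [Fintype n] [DecidableEq n] (M : Matrix n n ℝ) : Prop :=
  ∀ μ ∈ spectrum ℂ (M.map Complex.ofReal), μ.re < 0

section Helpers

open Polynomial Module

/-- injectivity of `mulVec` from full column rank. -/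
lemma mulVec_inj_of_rank {α β : Type*} [Fintype α] [Fintype β] (M : Matrix α β ℂ)
    (h : M.rank = Fintype.card β) {v : β → ℂ} (hv : M *ᵥ v = 0) : v = 0 := by
  have h' : finrank ℂ (LinearMap.range M.mulVecLin) = Fintype.card β := h
  have h1 := LinearMap.finrank_range_add_finrank_ker M.mulVecLin
  rw [h', Module.finrank_pi ℂ] at h1
  have hker : LinearMap.ker M.mulVecLin = ⊥ :=
    Submodule.finrank_eq_zero.mp (by omega)
  have : v ∈ LinearMap.ker M.mulVecLin := by
    simpa [Matrix.mulVecLin_apply] using hv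
  simpa [hker] using this

lemma mem_spectrum_of_root {n0 : ℕ} (M : Matrix (Fin n0) (Fin n0) ℂ) {μ : ℂ}
    (h : (Mᵀ.charpoly).IsRoot μ) : μ ∈ spectrum ℂ M := by
  have heval : (Mᵀ.charpoly).eval μ
      = (Polynomial.eval (Matrix.scalar (Fin n0) μ) (matPolyEquiv (charmatrix Mᵀ))).det := by
    rw [Matrix.charpoly, eval_det]
  rw [matPolyEquiv_charmatrix, eval_sub, eval_X, eval_C] at heval
  have hdet : (μ • (1 : Matrix (Fin n0) (Fin n0) ℂ) - M).det = 0 := by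
    rw [← Matrix.det_transpose]
    have : (μ • (1 : Matrix (Fin n0) (Fin n0) ℂ) - M)ᵀ = Matrix.scalar (Fin n0) μ - Mᵀ := by
      rw [transpose_sub, transpose_smul, transpose_one, scalar_apply, smul_eq_diagonal_mul]
      ext i j; by_cases hij : i = j <;> simp [Matrix.diagonal, Matrix.one_apply, Matrix.mul_apply, hij]
    rw [this, ← heval]
    exact h
  rw [spectrum.mem_iff]
  intro hU
  rw [Matrix.isUnit_iff_isUnit_det] at hU
  have : (algebraMap ℂ (Matrix (Fin n0) (Fin n0) ℂ) μ - M) = μ • 1 - M := by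
    rw [Algebra.algebraMap_eq_smul_one]
  rw [this, hdet] at hU
  exact hU.ne_zero rfl

lemma charpoly_list_prod {n0 : ℕ} (M : Matrix (Fin n0) (Fin n0) ℂ) :
    ((M.charpoly.roots.toList).map
      (fun μ => M - μ • (1 : Matrix (Fin n0) (Fin n0) ℂ))).prod = 0 := by
  have hm := M.charpoly_monic
  have hs : M.charpoly.Splits := IsAlgClosed.splits _
  have hp := hs.eq_prod_roots_of_monic hm
  have hCH := M.aeval_self_charpoly
  rw [hp] at hCH
  rw [← Multiset.coe_toList M.charpoly.roots, Multiset.map_coe, Multiset.prod_coe,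
    map_list_prod (Polynomial.aeval M), List.map_map] at hCH
  rw [← hCH]
  congr 2
  ext μ
  simp [Function.comp, Algebra.algebraMap_eq_smul_one]

lemma central_smul_one {n0 : ℕ} (μ : ℂ) (x : Matrix (Fin n0) (Fin n0) ℂ) :
    Commute (μ • (1 : Matrix (Fin n0) (Fin n0) ℂ)) x := by
  have := Algebra.commutes (R := ℂ) (A := Matrix (Fin n0) (Fin n0) ℂ) μ x
  rw [Algebra.algebraMap_eq_smul_one] at this
  exact this

lemma list_induction {n0 : ℕ} {ι : Type*} [Fintype ι] [DecidableEq ι]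
    (M : Matrix (Fin n0) (Fin n0) ℂ) (c : Matrix ι (Fin n0) ℂ)
    (hstep : ∀ μ : ℂ, M.charpoly.IsRoot μ → ∀ v : Fin n0 → ℂ,
      c *ᵥ (M *ᵥ v - μ • v) = 0 → c *ᵥ v = 0)
    (hCH : ((M.charpoly.roots.toList).map
      (fun μ => M - μ • (1 : Matrix (Fin n0) (Fin n0) ℂ))).prod = 0) :
    c = 0 := by
  have claim : ∀ l : List ℂ, (∀ μ ∈ l, M.charpoly.IsRoot μ) → ∀ v : Fin n0 → ℂ,
      ((l.map (fun μ => M - μ • (1 : Matrix (Fin n0) (Fin n0) ℂ))).prod) *ᵥ v = 0 →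
      c *ᵥ v = 0 := by
    intro l
    induction l with
    | nil =>
      intro _ v hv
      simp only [List.map_nil, List.prod_nil, Matrix.one_mulVec] at hv
      rw [hv, Matrix.mulVec_zero]
    | cons μ l IH =>
      intro hmem v hv
      have hcomm : ((M - μ • 1) *
          (l.map (fun ν => M - ν • (1 : Matrix (Fin n0) (Fin n0) ℂ))).prod) =
          ((l.map (fun ν => M - ν • (1 : Matrix (Fin n0) (Fin n0) ℂ))).prod * (M - μ • 1)) := by
        refine (Commute.list_prod_right _ _ ?_).eq
        intro x hx
        simp only [List.mem_map] at hx
        obtain ⟨ν, _, rfl⟩ := hx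
        exact Commute.sub_left ((Commute.refl M).sub_right (central_smul_one ν M).symm)
          ((central_smul_one μ M).sub_right (central_smul_one μ (ν • 1)))
      rw [List.map_cons, List.prod_cons, hcomm, ← Matrix.mulVec_mulVec] at hv
      have h1 := IH (fun ν hν => hmem ν (List.mem_cons_of_mem _ hν)) _ hv
      rw [Matrix.sub_mulVec, Matrix.smul_mulVec, Matrix.one_mulVec] at h1
      exact hstep μ (hmem μ List.mem_cons_self) v h1
  have hall : ∀ v : Fin n0 → ℂ, c *ᵥ v = 0 := by
    intro v
    refine claim M.charpoly.roots.toList ?_ v ?_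
    · intro μ hμ
      have := Multiset.mem_toList.mp hμ
      exact (Polynomial.mem_roots (M.charpoly_monic.ne_zero)).mp this
    · rw [hCH, Matrix.zero_mulVec]
  ext i j
  have := congrFun (hall (Pi.single j 1)) i
  simpa [Matrix.mulVec_single] using this

lemma L_surjective {n0 : ℕ} {ι κ : Type*} [Fintype ι] [Fintype κ] [DecidableEq ι] [DecidableEq κ]
    (D J : Matrix ι κ ℂ) (A0c : Matrix (Fin n0) (Fin n0) ℂ)
    (hinj : ∀ μ : ℂ, μ ∈ spectrum ℂ A0c → ∀ w : ι → ℂ, (μ • J - D)ᵀ *ᵥ w = 0 → w = 0)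
    (H : Matrix ι (Fin n0) ℂ) :
    ∃ G : Matrix κ (Fin n0) ℂ, D * G - J * G * A0c = H := by
  let L : Matrix κ (Fin n0) ℂ →ₗ[ℂ] Matrix ι (Fin n0) ℂ :=
    { toFun := fun G => D * G - J * G * A0c
      map_add' := by
        intro x y
        simp only [Matrix.mul_add, Matrix.add_mul]
        abel
      map_smul' := by
        intro a x
        simp only [Matrix.mul_smul, Matrix.smul_mul, smul_sub, RingHom.id_apply] }
  suffices hsurj : LinearMap.range L = ⊤ by
    have : H ∈ LinearMap.range L := by rw [hsurj]; trivial
    obtain ⟨G, hG⟩ := this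
    exact ⟨G, hG⟩
  by_contra hne
  obtain ⟨φ, hφne, hφbot⟩ :=
    Submodule.exists_dual_map_eq_bot_of_lt_top (lt_top_iff_ne_top.mpr hne) inferInstance
  have hφ0 : ∀ G : Matrix κ (Fin n0) ℂ, φ (D * G - J * G * A0c) = 0 := by
    intro G
    have h1 : φ (L G) ∈ (LinearMap.range L).map φ := ⟨L G, LinearMap.mem_range_self L G, rfl⟩
    rw [hφbot] at h1
    exact h1
  set c : Matrix ι (Fin n0) ℂ := Matrix.of (fun q j => φ (Matrix.single q j 1)) with hc
  have hrep : ∀ X : Matrix ι (Fin n0) ℂ, φ X = ∑ q, ∑ j, X q j * c q j := by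
    intro X
    conv_lhs => rw [matrix_eq_sum_single X]
    rw [map_sum]
    refine Finset.sum_congr rfl fun q _ => ?_
    rw [map_sum]
    refine Finset.sum_congr rfl fun j _ => ?_
    have : Matrix.single q j (X q j) = (X q j) • Matrix.single q j 1 := by
      rw [Matrix.smul_single, smul_eq_mul, mul_one]
    rw [this, φ.map_smul, smul_eq_mul, hc]
    rfl
  have hrel : Dᵀ * c = Jᵀ * c * A0cᵀ := by
    ext a l
    have h := hφ0 (Matrix.single a l 1)
    rw [map_sub, hrep, hrep] at h
    simp only [Matrix.mul_apply, Matrix.single, Matrix.of_apply, ite_and,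
      Finset.sum_ite_eq, Finset.sum_ite_eq', Finset.mem_univ, if_true,
      Finset.sum_mul, Finset.mul_sum, mul_ite, ite_mul, zero_mul, mul_zero, mul_one,
      Finset.sum_ite_irrel, Finset.sum_const_zero, Matrix.transpose_apply] at h ⊢
    rw [sub_eq_zero] at h
    rw [h, Finset.sum_comm]
    exact Finset.sum_congr rfl fun x _ => Finset.sum_congr rfl fun i _ => by ring
  have hstep : ∀ μ : ℂ, (A0cᵀ.charpoly).IsRoot μ → ∀ v : Fin n0 → ℂ,
      c *ᵥ (A0cᵀ *ᵥ v - μ • v) = 0 → c *ᵥ v = 0 := by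
    intro μ hμroot v hu
    have hμ : μ ∈ spectrum ℂ A0c := mem_spectrum_of_root A0c hμroot
    refine hinj μ hμ (c *ᵥ v) ?_
    have h1 : Dᵀ *ᵥ (c *ᵥ v) = Jᵀ *ᵥ (c *ᵥ (A0cᵀ *ᵥ v)) := by
      rw [Matrix.mulVec_mulVec, hrel, ← Matrix.mulVec_mulVec, ← Matrix.mulVec_mulVec]
    have h2 : c *ᵥ (A0cᵀ *ᵥ v) = μ • (c *ᵥ v) := by
      have h3 : A0cᵀ *ᵥ v = (A0cᵀ *ᵥ v - μ • v) + μ • v := by abel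
      rw [h3, Matrix.mulVec_add, hu, zero_add, Matrix.mulVec_smul]
    rw [Matrix.transpose_sub, Matrix.transpose_smul, Matrix.sub_mulVec,
      Matrix.smul_mulVec, h1, h2, Matrix.mulVec_smul]
    simp
  have hc0 : c = 0 := list_induction A0cᵀ c hstep (charpoly_list_prod A0cᵀ)
  apply hφne
  apply LinearMap.ext
  intro X
  rw [hrep X, hc0]
  simp
end Helpers

/-- For a stabilizable and detectable realization (A,B,C) such that no
eigenvalue of A₀ is a transmission zero of P(s) = C(sI − A)⁻¹B, and A − BF Hurwitz,
the regulator (Francis) equations (A − BF)Π + BF₀ = ΠA₀, CΠ = C₀ are solvable. -/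
theorem stmt13 {n m p n0 : ℕ}
    (A : Matrix (Fin n) (Fin n) ℝ) (B : Matrix (Fin n) (Fin m) ℝ)
    (C : Matrix (Fin p) (Fin n) ℝ)
    (A0 : Matrix (Fin n0) (Fin n0) ℝ) (C0 : Matrix (Fin p) (Fin n0) ℝ)
    (F : Matrix (Fin m) (Fin n) ℝ)
    (hmp : p ≤ m)
    (hA0 : ∀ μ ∈ spectrum ℂ (A0.map Complex.ofReal), μ.re = 0)
    (hstab : ∀ s : ℂ, 0 ≤ s.re →
      (Matrix.fromCols (s • (1 : Matrix (Fin n) (Fin n) ℂ) - A.map Complex.ofReal)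
        (B.map Complex.ofReal)).rank = n)
    (hdet : ∀ s : ℂ, 0 ≤ s.re →
      (Matrix.fromRows (s • (1 : Matrix (Fin n) (Fin n) ℂ) - A.map Complex.ofReal)
        (C.map Complex.ofReal)).rank = n)
    (hzero : ∀ s0 ∈ spectrum ℂ (A0.map Complex.ofReal),
      (Matrix.fromBlocks (s0 • (1 : Matrix (Fin n) (Fin n) ℂ) - A.map Complex.ofReal)
        (B.map Complex.ofReal) (C.map Complex.ofReal) 0).rank = n + p)
    (hH : Hurwitz (A - B * F)) :
    ∃ (P : Matrix (Fin n) (Fin n0) ℝ) (F0 : Matrix (Fin m) (Fin n0) ℝ),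
      (A - B * F) * P + B * F0 = P * A0 ∧ C * P = C0 := by
  set Ac := A.map Complex.ofReal with hAc
  set Bc := B.map Complex.ofReal with hBc
  set Cc := C.map Complex.ofReal with hCc
  set Fc := F.map Complex.ofReal with hFc
  set A0c := A0.map Complex.ofReal with hA0c
  set C0c := C0.map Complex.ofReal with hC0c
  set Acl : Matrix (Fin n) (Fin n) ℂ := Ac - Bc * Fc with hAcl
  set D : Matrix (Fin n ⊕ Fin p) (Fin n ⊕ Fin m) ℂ := fromBlocks Acl Bc Cc 0 with hD
  set J : Matrix (Fin n ⊕ Fin p) (Fin n ⊕ Fin m) ℂ := fromBlocks 1 0 0 0 with hJ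
  -- rank of the shifted Rosenbrock matrix
  have hrank : ∀ μ ∈ spectrum ℂ A0c, (μ • J - D).rank = n + p := by
    intro μ hμ
    have e1 : μ • J - D =
        fromBlocks (μ • (1 : Matrix (Fin n) (Fin n) ℂ) - Acl) (-Bc) (-Cc) 0 := by
      ext (i | i) (j | j) <;>
        simp [hD, hJ, Matrix.sub_apply, Matrix.smul_apply, Matrix.fromBlocks]
    have e2 : fromBlocks (μ • (1 : Matrix (Fin n) (Fin n) ℂ) - Acl) (-Bc) (-Cc) 0 =
        (fromBlocks (1 : Matrix (Fin n) (Fin n) ℂ) 0 0 (-1 : Matrix (Fin p) (Fin p) ℂ) : Matrix (Fin n ⊕ Fin p) (Fin n ⊕ Fin p) ℂ) *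
          ((fromBlocks (μ • (1 : Matrix (Fin n) (Fin n) ℂ) - Ac) Bc Cc 0 : Matrix (Fin n ⊕ Fin p) (Fin n ⊕ Fin m) ℂ) *
            (fromBlocks (1 : Matrix (Fin n) (Fin n) ℂ) 0 Fc 1 : Matrix (Fin n ⊕ Fin m) (Fin n ⊕ Fin m) ℂ)) *
          (fromBlocks (1 : Matrix (Fin n) (Fin n) ℂ) 0 0 (-1 : Matrix (Fin m) (Fin m) ℂ) : Matrix (Fin n ⊕ Fin m) (Fin n ⊕ Fin m) ℂ) := by
      simp only [Matrix.fromBlocks_multiply, Matrix.mul_one, Matrix.one_mul, Matrix.zero_mul,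
        Matrix.mul_zero, add_zero, zero_add, Matrix.neg_mul, Matrix.mul_neg, neg_zero]
      congr 1 <;> try abel
      · congr 1 <;> try abel
        rw [hAcl]; abel
    have hdetU : IsUnit (fromBlocks (1 : Matrix (Fin n) (Fin n) ℂ) 0 Fc 1).det := by
      rw [Matrix.det_fromBlocks_zero₁₂]; simp
    have hdetL : IsUnit (fromBlocks (1 : Matrix (Fin n) (Fin n) ℂ) 0 0
        (-1 : Matrix (Fin p) (Fin p) ℂ)).det := by
      rw [Matrix.det_fromBlocks_zero₁₂]
      simp only [Matrix.det_one, one_mul]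
      have : (-1 : Matrix (Fin p) (Fin p) ℂ) = (-1 : ℂ) • 1 := by simp
      rw [this, Matrix.det_smul, Matrix.det_one]
      simp [isUnit_iff_ne_zero]
    have hdetR : IsUnit (fromBlocks (1 : Matrix (Fin n) (Fin n) ℂ) 0 0
        (-1 : Matrix (Fin m) (Fin m) ℂ)).det := by
      rw [Matrix.det_fromBlocks_zero₁₂]
      simp only [Matrix.det_one, one_mul]
      have : (-1 : Matrix (Fin m) (Fin m) ℂ) = (-1 : ℂ) • 1 := by simp
      rw [this, Matrix.det_smul, Matrix.det_one]
      simp [isUnit_iff_ne_zero]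
    rw [e1, e2, Matrix.rank_mul_eq_left_of_isUnit_det _ _ hdetR,
      Matrix.rank_mul_eq_right_of_isUnit_det _ _ hdetL,
      Matrix.rank_mul_eq_left_of_isUnit_det _ _ hdetU]
    exact hzero μ hμ
  have hinj : ∀ μ : ℂ, μ ∈ spectrum ℂ A0c →
      ∀ w : (Fin n ⊕ Fin p) → ℂ, (μ • J - D)ᵀ *ᵥ w = 0 → w = 0 := by
    intro μ hμ w hw
    refine mulVec_inj_of_rank _ ?_ hw
    rw [Matrix.rank_transpose, hrank μ hμ]
    simp
  obtain ⟨G, hG⟩ := L_surjective D J A0c hinj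
    (Matrix.fromRows (0 : Matrix (Fin n) (Fin n0) ℂ) C0c)
  have hmap : ∀ (i : Fin n) (k : Fin n), Acl i k = ((A - B * F) i k : ℝ) := by
    intro i k
    simp only [hAcl, hAc, hBc, hFc, Matrix.sub_apply, Matrix.mul_apply, Matrix.map_apply]
    push_cast
    ring
  refine ⟨Matrix.of (fun i j => (G (Sum.inl i) j).re),
          Matrix.of (fun i j => (G (Sum.inr i) j).re), ?_, ?_⟩
  · ext i j
    have h1 : (D * G - J * G * A0c) (Sum.inl i) j = 0 := by rw [hG]; simp
    have h3 : (∑ k, Acl i k * G (Sum.inl k) j + ∑ k, Bc i k * G (Sum.inr k) j)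
        - ∑ l, G (Sum.inl i) l * A0c l j = 0 := by
      simpa [Matrix.sub_apply, Matrix.mul_apply, Fintype.sum_sum_type, hD, hJ,
        Matrix.one_apply, Finset.sum_ite_eq, ite_mul, zero_mul, Finset.mul_sum,
        Finset.sum_mul] using h1
    have h4 := congrArg Complex.re h3
    simp only [Complex.sub_re, Complex.add_re, Complex.re_sum, hmap, hBc, hA0c,
      Matrix.map_apply, Complex.mul_re, Complex.ofReal_re, Complex.ofReal_im, zero_mul,
      sub_zero, Complex.zero_re, mul_zero] at h4
    simp only [Matrix.add_apply, Matrix.mul_apply, Matrix.of_apply]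
    rw [sub_eq_zero] at h4
    convert h4 using 2 <;> ring
  · ext i j
    have h1 : (D * G - J * G * A0c) (Sum.inr i) j = C0c i j := by rw [hG]; simp
    have h3 : ∑ k, Cc i k * G (Sum.inl k) j = C0c i j := by
      simpa [Matrix.sub_apply, Matrix.mul_apply, Fintype.sum_sum_type, hD, hJ,
        Matrix.one_apply, Finset.sum_ite_eq, ite_mul, zero_mul, Finset.mul_sum,
        Finset.sum_mul] using h1
    have h4 := congrArg Complex.re h3
    simp only [Complex.re_sum, hCc, hC0c, Matrix.map_apply, Complex.mul_re,
      Complex.ofReal_re, Complex.ofReal_im, zero_mul, sub_zero] at h4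
    simpa [Matrix.mul_apply] using h4
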